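/- For independent exponential rate-1 random variables X (max of M₁ i.i.d.) and Y (max of M₂ i.i.d.), the probability P(X ≤ a + b/Y) admits the closed form 2M₂ Σ_{q=0}^{M₂-1} [ (-1)^q C(M₂-1,q)/(2(q+1)) + Σ_{p=1}^{M₁} C(M₂-1,q) C(M₁,p) (-1)^{q+p} e^{-pa} √(pb/(q+1)) K₁(2√(p(q+1)b)) ]. -/

import Mathlib

open MeasureTheory ProbabilityTheory Real Set

/-- Modified Bessel function of the second kind of order 1 (integral representation). -/
noncomputable def besselK1 (z : ℝ) : ℝ :=
  (z / 4) * ∫ t in Set.Ioi (0 : ℝ), t ^ (-(2 : ℝ)) * Real.exp (-t - z ^ 2 / (4 * t))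

noncomputable def dens (M : ℕ) (x : ℝ) : ℝ :=
  if 0 < x then (M : ℝ) * (1 - Real.exp (-x)) ^ (M - 1) * Real.exp (-x) else 0

lemma dens_nonneg (M : ℕ) (x : ℝ) : 0 ≤ dens M x := by
  unfold dens
  split_ifs with h
  · have h1 : Real.exp (-x) ≤ 1 := Real.exp_le_one_iff.mpr (by linarith)
    have h2 : (0:ℝ) ≤ 1 - Real.exp (-x) := by linarith
    exact mul_nonneg (mul_nonneg (Nat.cast_nonneg M) (pow_nonneg h2 _)) (Real.exp_pos _).le
  · exact le_rfl

lemma dens_measurable (M : ℕ) : Measurable (dens M) := by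
  unfold dens
  exact Measurable.ite measurableSet_Ioi (by fun_prop) measurable_const

lemma hasDerivAt_F (M : ℕ) (x : ℝ) :
    HasDerivAt (fun x => (1 - Real.exp (-x)) ^ M)
      ((M : ℝ) * (1 - Real.exp (-x)) ^ (M - 1) * Real.exp (-x)) x := by
  have h1 : HasDerivAt (fun x : ℝ => 1 - Real.exp (-x)) (Real.exp (-x)) x := by
    have := ((hasDerivAt_id x).neg.exp).const_sub 1
    simpa using this
  simpa using h1.fun_pow M

lemma dens_le (M : ℕ) {x : ℝ} (hx : 0 < x) :
    (M : ℝ) * (1 - Real.exp (-x)) ^ (M - 1) * Real.exp (-x) ≤ (M : ℝ) * Real.exp (-x) := by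
  have h1 : Real.exp (-x) ≤ 1 := Real.exp_le_one_iff.mpr (by linarith)
  have h2 : (0:ℝ) ≤ 1 - Real.exp (-x) := by linarith
  have h3 : (1 - Real.exp (-x)) ^ (M - 1) ≤ 1 :=
    pow_le_one₀ h2 (by have := Real.exp_pos (-x); linarith)
  have h4 : (M:ℝ) * (1 - Real.exp (-x)) ^ (M - 1) ≤ (M:ℝ) * 1 :=
    mul_le_mul_of_nonneg_left h3 (Nat.cast_nonneg M)
  have := (Real.exp_pos (-x)).le
  calc (M : ℝ) * (1 - Real.exp (-x)) ^ (M - 1) * Real.exp (-x)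
      ≤ (M:ℝ) * 1 * Real.exp (-x) := mul_le_mul_of_nonneg_right h4 this
    _ = (M : ℝ) * Real.exp (-x) := by ring

lemma integrableOn_densfun (M : ℕ) :
    IntegrableOn (fun x => (M : ℝ) * (1 - Real.exp (-x)) ^ (M - 1) * Real.exp (-x))
      (Ioi (0:ℝ)) := by
  refine ((exp_neg_integrableOn_Ioi 0 one_pos).const_mul (M : ℝ)).mono' (Measurable.aestronglyMeasurable (by fun_prop)) ?_
  filter_upwards [ae_restrict_mem measurableSet_Ioi] with x hx
  have h1 : Real.exp (-x) ≤ 1 := Real.exp_le_one_iff.mpr (by linarith [mem_Ioi.mp hx])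
  have h2 : (0:ℝ) ≤ 1 - Real.exp (-x) := by linarith
  have := Real.exp_pos (-x)
  rw [Real.norm_eq_abs, abs_of_nonneg (by positivity)]
  simpa [neg_mul] using dens_le M (mem_Ioi.mp hx)

lemma ftc_interval (M : ℕ) (hM : 0 < M) {c : ℝ} (hc : 0 ≤ c) :
    ∫ x in (0:ℝ)..c, (M : ℝ) * (1 - Real.exp (-x)) ^ (M - 1) * Real.exp (-x)
      = (1 - Real.exp (-c)) ^ M := by
  have h := intervalIntegral.integral_eq_sub_of_hasDerivAt
    (f := fun x => (1 - Real.exp (-x)) ^ M)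
    (f' := fun x => (M : ℝ) * (1 - Real.exp (-x)) ^ (M - 1) * Real.exp (-x))
    (fun x _ => hasDerivAt_F M x)
    (Continuous.intervalIntegrable (by fun_prop) 0 c)
  rw [h]
  simp [zero_pow hM.ne']

lemma lint_Iic (M : ℕ) (hM : 0 < M) {c : ℝ} (hc : 0 < c) :
    ∫⁻ x in Iic c, ENNReal.ofReal (dens M x) = ENNReal.ofReal ((1 - Real.exp (-c)) ^ M) := by
  have hsplit : Iic c = Iic 0 ∪ Ioc 0 c := (Set.Iic_union_Ioc_eq_Iic hc.le).symm
  rw [hsplit, lintegral_union measurableSet_Ioc (Set.Iic_disjoint_Ioc le_rfl)]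
  have h0 : ∫⁻ x in Iic (0:ℝ), ENNReal.ofReal (dens M x) = 0 := by
    rw [setLIntegral_eq_zero_iff measurableSet_Iic (Measurable.ennreal_ofReal (dens_measurable M))]
    filter_upwards [] with x
    intro hx
    simp only [mem_Iic] at hx
    simp [dens, not_lt.mpr hx]
  rw [h0, zero_add]
  have heq : ∀ x ∈ Ioc (0:ℝ) c,
      dens M x = (M : ℝ) * (1 - Real.exp (-x)) ^ (M - 1) * Real.exp (-x) := by
    intro x hx
    simp [dens, hx.1]
  have hint : IntegrableOn (dens M) (Ioc 0 c) := by
    refine (integrableOn_congr_fun heq measurableSet_Ioc).mpr ?_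
    exact (integrableOn_densfun M).mono_set Ioc_subset_Ioi_self
  rw [← ofReal_integral_eq_lintegral_ofReal hint
    (Filter.Eventually.of_forall fun x => dens_nonneg M x)]
  rw [setIntegral_congr_fun measurableSet_Ioc heq,
    ← intervalIntegral.integral_of_le hc.le, ftc_interval M hM hc.le]

lemma integral_Ioi_dens (M : ℕ) (hM : 0 < M) :
    ∫ x in Ioi (0:ℝ), (M : ℝ) * (1 - Real.exp (-x)) ^ (M - 1) * Real.exp (-x) = 1 := by
  have h := integral_Ioi_of_hasDerivAt_of_tendsto
    (f := fun x => (1 - Real.exp (-x)) ^ M)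
    (f' := fun x => (M : ℝ) * (1 - Real.exp (-x)) ^ (M - 1) * Real.exp (-x))
    (a := 0) (m := 1)
    (Continuous.continuousWithinAt (by fun_prop))
    (fun x _ => hasDerivAt_F M x) (integrableOn_densfun M) ?_
  · rw [h]; simp [zero_pow hM.ne']
  · have h1 : Filter.Tendsto (fun x : ℝ => 1 - Real.exp (-x)) Filter.atTop (nhds 1) := by
      have := Real.tendsto_exp_neg_atTop_nhds_zero
      simpa using (tendsto_const_nhds (x := (1:ℝ))).sub this
    simpa using h1.pow M

lemma lint_total (M : ℕ) (hM : 0 < M) :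
    ∫⁻ x, ENNReal.ofReal (dens M x) = 1 := by
  rw [← lintegral_add_compl (fun x => ENNReal.ofReal (dens M x)) (measurableSet_Iic (a := (0:ℝ)))]
  have h0 : ∫⁻ x in Iic (0:ℝ), ENNReal.ofReal (dens M x) = 0 := by
    rw [setLIntegral_eq_zero_iff measurableSet_Iic (Measurable.ennreal_ofReal (dens_measurable M))]
    filter_upwards [] with x
    intro hx
    simp only [mem_Iic] at hx
    simp [dens, not_lt.mpr hx]
  rw [h0, zero_add, compl_Iic]
  have heq : ∀ x ∈ Ioi (0:ℝ),
      dens M x = (M : ℝ) * (1 - Real.exp (-x)) ^ (M - 1) * Real.exp (-x) := by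
    intro x hx
    simp [dens, mem_Ioi.mp hx]
  have hint : IntegrableOn (dens M) (Ioi 0) :=
    (integrableOn_congr_fun heq measurableSet_Ioi).mpr (integrableOn_densfun M)
  rw [← ofReal_integral_eq_lintegral_ofReal hint
    (Filter.Eventually.of_forall fun x => dens_nonneg M x),
    setIntegral_congr_fun measurableSet_Ioi heq, integral_Ioi_dens M hM]
  simp

lemma map_eq_withDensity {Ω : Type*} [MeasurableSpace Ω] (P : Measure Ω) [IsProbabilityMeasure P]
    (M : ℕ) (hM : 0 < M) (X : Ω → ℝ) (hX : Measurable X)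
    (hXpdf : ∀ᵐ x ∂(volume : Measure ℝ),
      pdf X P volume x = ENNReal.ofReal (dens M x)) :
    Measure.map X P = volume.withDensity (fun x => ENNReal.ofReal (dens M x)) := by
  have hprob : IsProbabilityMeasure (Measure.map X P) :=
    Measure.isProbabilityMeasure_map hX.aemeasurable
  have hdec := Measure.haveLebesgueDecomposition_add (Measure.map X P) volume
  have hwd : volume.withDensity ((Measure.map X P).rnDeriv volume)
      = volume.withDensity (fun x => ENNReal.ofReal (dens M x)) :=
    withDensity_congr_ae hXpdf
  have hmass : volume.withDensity (fun x => ENNReal.ofReal (dens M x)) Set.univ = 1 := by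
    rw [withDensity_apply _ MeasurableSet.univ, Measure.restrict_univ, lint_total M hM]
  have hsing : (Measure.map X P).singularPart volume Set.univ = 0 := by
    have h1 : (Measure.map X P) Set.univ = 1 := measure_univ
    rw [hdec] at h1
    rw [Measure.add_apply, hwd, hmass] at h1
    have h2 : (Measure.map X P).singularPart volume Set.univ + 1 = 0 + 1 := by
      rw [h1, zero_add]
    exact (ENNReal.add_left_inj (by simp)).mp h2
  have hsing0 : (Measure.map X P).singularPart volume = 0 :=
    Measure.measure_univ_eq_zero.mp hsing
  rw [hdec, hsing0, zero_add, hwd]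

lemma integrableOn_exp_aux {r s : ℝ} (hr : 0 < r) (hs : 0 ≤ s) :
    IntegrableOn (fun y => Real.exp (-(r * y) - s / y)) (Ioi (0:ℝ)) := by
  refine (exp_neg_integrableOn_Ioi 0 hr).mono' (Measurable.aestronglyMeasurable (by fun_prop)) ?_
  filter_upwards [ae_restrict_mem measurableSet_Ioi] with y hy
  have hy0 : 0 < y := mem_Ioi.mp hy
  rw [Real.norm_eq_abs, abs_of_nonneg (Real.exp_pos _).le, neg_mul]
  exact Real.exp_le_exp.mpr (by have : 0 ≤ s / y := div_nonneg hs hy0.le; linarith)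

lemma integral_exp_Ioi {r : ℝ} (hr : 0 < r) :
    ∫ y in Ioi (0:ℝ), Real.exp (-(r * y)) = r⁻¹ := by
  have h := integral_Ioi_of_hasDerivAt_of_tendsto
    (f := fun y => -r⁻¹ * Real.exp (-(r * y)))
    (f' := fun y => Real.exp (-(r * y)))
    (a := 0) (m := 0)
    (Continuous.continuousWithinAt (by fun_prop))
    (fun x _ => by
      have h1 : HasDerivAt (fun y : ℝ => -(r * y)) (-r) x := by
        simpa using ((hasDerivAt_id x).const_mul r).fun_neg
      have := (h1.exp).const_mul (-r⁻¹)
      convert this using 1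
      · rfl
      · field_simp)
    (by simpa [neg_mul] using exp_neg_integrableOn_Ioi 0 hr) ?_
  · rw [h]; simp
  · have h2 : Filter.Tendsto (fun y : ℝ => -(r * y)) Filter.atTop Filter.atBot :=
      Filter.tendsto_atTop_atBot.mpr fun c => ⟨max 0 ((-c)/r), fun x hx => by
        have h3 := (le_max_right 0 ((-c)/r)).trans hx
        nlinarith [(div_le_iff₀ hr).mp h3]⟩
    have := Real.tendsto_exp_atBot.comp h2
    simpa using (this.const_mul (-r⁻¹))

lemma bessel_key {r s : ℝ} (hr : 0 < r) (hs : 0 < s) :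
    ∫ y in Ioi (0:ℝ), Real.exp (-(r * y) - s / y)
      = 2 * Real.sqrt (s / r) * besselK1 (2 * Real.sqrt (r * s)) := by
  set I := ∫ y in Ioi (0:ℝ), Real.exp (-(r * y) - s / y) with hI
  -- step B : substitution x ↦ x⁻¹
  have hB : ∫ x in Ioi (0:ℝ), x ^ (-(2:ℝ)) * Real.exp (-(s * x) - r / x) = I := by
    have h := integral_comp_rpow_Ioi (fun y => Real.exp (-(r * y) - s / y))
      (p := -1) (by norm_num)
    rw [show I = ∫ y in Ioi (0:ℝ), (fun y => Real.exp (-(r * y) - s / y)) y from rfl, ← h]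
    refine setIntegral_congr_fun measurableSet_Ioi fun x hx => ?_
    have hx0 : 0 < x := mem_Ioi.mp hx
    simp only [smul_eq_mul, abs_neg, abs_one, one_mul, Real.rpow_neg_one]
    norm_num
    left
    have h2 : r * x⁻¹ = r / x := by field_simp
    rw [h2]
    ring_nf
  -- step A : scaling t = s * x
  have hA : ∫ t in Ioi (0:ℝ), t ^ (-(2:ℝ)) * Real.exp (-t - (r * s) / t) = s⁻¹ * I := by
    have h := integral_comp_mul_left_Ioi
      (fun t => t ^ (-(2:ℝ)) * Real.exp (-t - (r * s) / t)) 0 hs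
    simp only [mul_zero, smul_eq_mul] at h
    have h2 : ∫ x in Ioi (0:ℝ),
        (s * x) ^ (-(2:ℝ)) * Real.exp (-(s * x) - (r * s) / (s * x))
        = s ^ (-(2:ℝ)) * ∫ x in Ioi (0:ℝ), x ^ (-(2:ℝ)) * Real.exp (-(s * x) - r / x) := by
      rw [← MeasureTheory.integral_const_mul]
      refine setIntegral_congr_fun measurableSet_Ioi fun x hx => ?_
      have hx0 : 0 < x := mem_Ioi.mp hx
      have h3 : r * s / (s * x) = r / x := by
        rw [mul_comm r s, mul_div_mul_left r x hs.ne']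
      rw [Real.mul_rpow hs.le hx0.le, h3]
      ring
    have h4 : s⁻¹ * (∫ t in Ioi (0:ℝ), t ^ (-(2:ℝ)) * Real.exp (-t - (r * s) / t))
        = s ^ (-(2:ℝ)) * I := by rw [← h, h2, hB]
    have h5 : s ^ (-(2:ℝ)) = s⁻¹ * s⁻¹ := by
      rw [show (-(2:ℝ)) = (-1) + (-1) by norm_num, Real.rpow_add hs, Real.rpow_neg_one]
    refine mul_left_cancel₀ (inv_ne_zero hs.ne') ?_
    rw [h4, h5]
    ring
  -- assemble
  have harg : ∀ t : ℝ, (2 * Real.sqrt (r * s)) ^ 2 / (4 * t) = (r * s) / t := by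
    intro t
    rw [mul_pow, Real.sq_sqrt (by positivity : (0:ℝ) ≤ r * s),
      show (2:ℝ) ^ 2 * (r * s) = 4 * (r * s) by ring,
      mul_div_mul_left (r * s) t (by norm_num : (4:ℝ) ≠ 0)]
  have hk : besselK1 (2 * Real.sqrt (r * s)) = (2 * Real.sqrt (r * s) / 4) * (s⁻¹ * I) := by
    rw [besselK1]
    congr 1
    rw [← hA]
    refine setIntegral_congr_fun measurableSet_Ioi fun t ht => ?_
    rw [harg t]
  have hss : Real.sqrt (s / r) * Real.sqrt (r * s) = s := by
    rw [← Real.sqrt_mul (by positivity) (r * s),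
      show s / r * (r * s) = s ^ 2 by field_simp, Real.sqrt_sq hs.le]
  rw [hk, show 2 * Real.sqrt (s / r) * (2 * Real.sqrt (r * s) / 4 * (s⁻¹ * I))
      = (Real.sqrt (s / r) * Real.sqrt (r * s)) * s⁻¹ * I by ring, hss,
    mul_inv_cancel₀ hs.ne', one_mul]

lemma one_sub_pow (t : ℝ) (n : ℕ) :
    (1 - t) ^ n = ∑ k ∈ Finset.range (n + 1), (n.choose k : ℝ) * (-1) ^ k * t ^ k := by
  rw [sub_eq_add_neg, add_comm, add_pow]
  refine Finset.sum_congr rfl fun k _ => ?_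
  rw [neg_pow]
  ring

lemma sum_split (n : ℕ) (f : ℕ → ℝ) :
    ∑ p ∈ Finset.range (n + 1), f p = f 0 + ∑ p ∈ Finset.Icc 1 n, f p := by
  rw [Finset.sum_eq_sum_sdiff_singleton_add (Finset.mem_range.mpr (Nat.succ_pos n)) f]
  have h : Finset.range (n + 1) \ {0} = Finset.Icc 1 n := by
    ext i
    simp [Nat.lt_succ_iff]
    omega
  rw [h]
  ring

lemma exp_term (a b : ℝ) (q p : ℕ) (y : ℝ) :
    Real.exp (-y) ^ q * Real.exp (-y) * Real.exp (-(a + b / y)) ^ p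
      = Real.exp (-(p : ℝ) * a) * Real.exp (-(((q : ℝ) + 1) * y) - ((p : ℝ) * b) / y) := by
  rw [← Real.exp_nat_mul, ← Real.exp_nat_mul, ← Real.exp_add, ← Real.exp_add, ← Real.exp_add]
  congr 1
  ring

lemma main_integral (M₁ M₂ : ℕ) (hM₁ : 0 < M₁) (hM₂ : 0 < M₂) (a b : ℝ)
    (ha : 0 < a) (hb : 0 < b) :
    ∫ y in Ioi (0:ℝ),
        (M₂ : ℝ) * (1 - Real.exp (-y)) ^ (M₂ - 1) * Real.exp (-y)
          * (1 - Real.exp (-(a + b / y))) ^ M₁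
      = 2 * (M₂ : ℝ) * ∑ q ∈ Finset.range M₂,
        ((-1 : ℝ) ^ q * ((M₂ - 1).choose q : ℝ) / (2 * ((q : ℝ) + 1)) +
          ∑ p ∈ Finset.Icc 1 M₁,
            ((M₂ - 1).choose q : ℝ) * (M₁.choose p : ℝ) * (-1 : ℝ) ^ (q + p) *
              Real.exp (-(p : ℝ) * a) * Real.sqrt ((p : ℝ) * b / ((q : ℝ) + 1)) *
              besselK1 (2 * Real.sqrt ((p : ℝ) * ((q : ℝ) + 1) * b))) := by
  set c : ℕ → ℕ → ℝ := fun q p =>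
    (M₂ : ℝ) * (((M₂ - 1).choose q : ℝ) * (-1) ^ q) * ((M₁.choose p : ℝ) * (-1) ^ p)
      * Real.exp (-(p : ℝ) * a) with hc
  set T : ℕ → ℕ → ℝ → ℝ := fun q p y =>
    c q p * Real.exp (-(((q : ℝ) + 1) * y) - ((p : ℝ) * b) / y) with hT
  have hM₂' : M₂ - 1 + 1 = M₂ := Nat.succ_pred_eq_of_pos hM₂
  -- pointwise expansion
  have hexp : ∀ y ∈ Ioi (0:ℝ),
      (M₂ : ℝ) * (1 - Real.exp (-y)) ^ (M₂ - 1) * Real.exp (-y)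
          * (1 - Real.exp (-(a + b / y))) ^ M₁
        = ∑ q ∈ Finset.range M₂, ∑ p ∈ Finset.range (M₁ + 1), T q p y := by
    intro y hy
    rw [one_sub_pow (Real.exp (-y)) (M₂ - 1), one_sub_pow (Real.exp (-(a + b / y))) M₁, hM₂']
    rw [show (M₂ : ℝ) * (∑ q ∈ Finset.range M₂,
          ((M₂ - 1).choose q : ℝ) * (-1) ^ q * Real.exp (-y) ^ q) * Real.exp (-y)
        * (∑ p ∈ Finset.range (M₁ + 1),
          (M₁.choose p : ℝ) * (-1) ^ p * Real.exp (-(a + b / y)) ^ p)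
        = ((∑ q ∈ Finset.range M₂,
          ((M₂ - 1).choose q : ℝ) * (-1) ^ q * Real.exp (-y) ^ q)
        * (∑ p ∈ Finset.range (M₁ + 1),
          (M₁.choose p : ℝ) * (-1) ^ p * Real.exp (-(a + b / y)) ^ p))
        * ((M₂ : ℝ) * Real.exp (-y)) by ring]
    rw [Finset.sum_mul_sum, Finset.sum_mul]
    refine Finset.sum_congr rfl fun q _ => ?_
    rw [Finset.sum_mul]
    refine Finset.sum_congr rfl fun p _ => ?_
    rw [hT, hc]
    simp only []
    linear_combination (((M₂ - 1).choose q : ℝ) * (-1) ^ q * ((M₁.choose p : ℝ) * (-1) ^ p)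
      * (M₂ : ℝ)) * exp_term a b q p y
  have hint : ∀ q p : ℕ, IntegrableOn (fun y => T q p y) (Ioi (0:ℝ)) := by
    intro q p
    exact (integrableOn_exp_aux (by positivity) (by positivity)).const_mul _
  rw [setIntegral_congr_fun measurableSet_Ioi hexp]
  rw [integral_finset_sum _ (fun q _ => integrable_finset_sum _ (fun p _ => hint q p))]
  have hq : ∀ q ∈ Finset.range M₂,
      ∫ y in Ioi (0:ℝ), ∑ p ∈ Finset.range (M₁ + 1), T q p y
        = c q 0 * ((q : ℝ) + 1)⁻¹
          + ∑ p ∈ Finset.Icc 1 M₁, c q p *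
            (2 * Real.sqrt ((p : ℝ) * b / ((q : ℝ) + 1))
              * besselK1 (2 * Real.sqrt (((q : ℝ) + 1) * ((p : ℝ) * b)))) := by
    intro q _
    rw [integral_finset_sum _ (fun p _ => hint q p)]
    have hval : ∀ p ∈ Finset.range (M₁ + 1), ∫ y in Ioi (0:ℝ), T q p y
        = c q p * ∫ y in Ioi (0:ℝ),
            Real.exp (-(((q : ℝ) + 1) * y) - ((p : ℝ) * b) / y) := by
      intro p _
      exact MeasureTheory.integral_const_mul _ _
    rw [Finset.sum_congr rfl hval, sum_split]
    congr 1
    · -- p = 0 term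
      have h0 : ∀ y : ℝ, -(((q : ℝ) + 1) * y) - ((0 : ℕ) : ℝ) * b / y
          = -(((q : ℝ) + 1) * y) := by
        intro y
        simp
      rw [show (∫ y in Ioi (0:ℝ),
          Real.exp (-(((q : ℝ) + 1) * y) - (((0:ℕ) : ℝ) * b) / y))
          = ∫ y in Ioi (0:ℝ), Real.exp (-(((q : ℝ) + 1) * y)) by
        refine setIntegral_congr_fun measurableSet_Ioi fun y _ => ?_
        rw [h0 y]]
      rw [integral_exp_Ioi (by positivity)]
    · refine Finset.sum_congr rfl fun p hp => ?_
      have hp1 : 1 ≤ p := (Finset.mem_Icc.mp hp).1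
      have hppos : (0:ℝ) < (p : ℝ) := by exact_mod_cast hp1
      rw [bessel_key (by positivity) (by positivity)]
  rw [Finset.sum_congr rfl hq, Finset.mul_sum]
  refine Finset.sum_congr rfl fun q _ => ?_
  rw [mul_add, Finset.mul_sum]
  congr 1
  · rw [hc]
    simp only [Nat.choose_zero_right, Nat.cast_one, pow_zero, Nat.cast_zero]
    rw [show -(0:ℝ) * a = 0 by ring, Real.exp_zero]
    have : ((q:ℝ) + 1) ≠ 0 := by positivity
    field_simp
  · refine Finset.sum_congr rfl fun p hp => ?_
    have harg : ((q : ℝ) + 1) * ((p : ℝ) * b) = (p : ℝ) * ((q : ℝ) + 1) * b := by ring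
    rw [hc, harg, pow_add]
    ring

/-- Closed form of P(X ≤ a + b/Y) where X is the max of M₁ i.i.d. Exp(1) variables and
Y the max of M₂ i.i.d. Exp(1) variables, X, Y independent. -/
theorem stmt_16 {Ω : Type*} [MeasurableSpace Ω] (P : Measure Ω) [IsProbabilityMeasure P]
    (M₁ M₂ : ℕ) (hM₁ : 0 < M₁) (hM₂ : 0 < M₂)
    (X Y : Ω → ℝ) (hX : Measurable X) (hY : Measurable Y)
    (hXpdf : ∀ᵐ x ∂(volume : Measure ℝ),
      pdf X P volume x = ENNReal.ofReal
        (if 0 < x then (M₁ : ℝ) * (1 - Real.exp (-x)) ^ (M₁ - 1) * Real.exp (-x) else 0))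
    (hYpdf : ∀ᵐ y ∂(volume : Measure ℝ),
      pdf Y P volume y = ENNReal.ofReal
        (if 0 < y then (M₂ : ℝ) * (1 - Real.exp (-y)) ^ (M₂ - 1) * Real.exp (-y) else 0))
    (hindep : IndepFun X Y P) (a b : ℝ) (ha : 0 < a) (hb : 0 < b) :
    (P {ω | X ω ≤ a + b / Y ω}).toReal =
      2 * (M₂ : ℝ) * ∑ q ∈ Finset.range M₂,
        ((-1 : ℝ) ^ q * ((M₂ - 1).choose q : ℝ) / (2 * ((q : ℝ) + 1)) +
          ∑ p ∈ Finset.Icc 1 M₁,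
            ((M₂ - 1).choose q : ℝ) * (M₁.choose p : ℝ) * (-1 : ℝ) ^ (q + p) *
              Real.exp (-(p : ℝ) * a) * Real.sqrt ((p : ℝ) * b / ((q : ℝ) + 1)) *
              besselK1 (2 * Real.sqrt ((p : ℝ) * ((q : ℝ) + 1) * b))) := by
  have hdX : Measure.map X P = volume.withDensity (fun x => ENNReal.ofReal (dens M₁ x)) :=
    map_eq_withDensity P M₁ hM₁ X hX hXpdf
  have hdY : Measure.map Y P = volume.withDensity (fun y => ENNReal.ofReal (dens M₂ y)) :=
    map_eq_withDensity P M₂ hM₂ Y hY hYpdf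
  have hT : MeasurableSet {p : ℝ × ℝ | p.2 ≤ a + b / p.1} :=
    measurableSet_le measurable_snd (measurable_const.add (measurable_const.div measurable_fst))
  have hmap : Measure.map (fun ω => (Y ω, X ω)) P
      = (Measure.map Y P).prod (Measure.map X P) :=
    (indepFun_iff_map_prod_eq_prod_map_map hY.aemeasurable hX.aemeasurable).mp hindep.symm
  have hgmeas : Measurable fun y : ℝ => (Measure.map X P) (Iic (a + b / y)) := by
    have h1 : Measurable fun c : ℝ => (Measure.map X P) (Iic c) :=
      Monotone.measurable fun c d hcd => measure_mono (Iic_subset_Iic.mpr hcd)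
    exact h1.comp (measurable_const.add (measurable_const.div measurable_id))
  have h1 : P {ω | X ω ≤ a + b / Y ω}
      = ∫⁻ y, ENNReal.ofReal (dens M₂ y) * (Measure.map X P) (Iic (a + b / y)) := by
    have hS : {ω | X ω ≤ a + b / Y ω}
        = (fun ω => (Y ω, X ω)) ⁻¹' {p : ℝ × ℝ | p.2 ≤ a + b / p.1} := rfl
    rw [hS, ← Measure.map_apply (hY.prodMk hX) hT, hmap, Measure.prod_apply hT]
    have h2 : ∀ y : ℝ, (Prod.mk y ⁻¹' {p : ℝ × ℝ | p.2 ≤ a + b / p.1}) = Iic (a + b / y) := by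
      intro y
      ext x
      simp
    rw [show (fun y => (Measure.map X P) (Prod.mk y ⁻¹' {p : ℝ × ℝ | p.2 ≤ a + b / p.1}))
        = fun y => (Measure.map X P) (Iic (a + b / y)) by funext y; rw [h2 y]]
    rw [hdY, lintegral_withDensity_eq_lintegral_mul _
      (Measurable.ennreal_ofReal (dens_measurable M₂)) hgmeas]
    rfl
  have h3 : P {ω | X ω ≤ a + b / Y ω} = ∫⁻ y in Ioi (0:ℝ),
      ENNReal.ofReal ((M₂ : ℝ) * (1 - Real.exp (-y)) ^ (M₂ - 1) * Real.exp (-y)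
        * (1 - Real.exp (-(a + b / y))) ^ M₁) := by
    rw [h1, ← lintegral_add_compl
      (fun y => ENNReal.ofReal (dens M₂ y) * (Measure.map X P) (Iic (a + b / y)))
      measurableSet_Ioi]
    have hzero : ∫⁻ y in (Ioi (0:ℝ))ᶜ,
        ENNReal.ofReal (dens M₂ y) * (Measure.map X P) (Iic (a + b / y)) = 0 := by
      rw [compl_Ioi]
      rw [setLIntegral_congr_fun measurableSet_Iic
        (fun y (hy : y ∈ Iic (0:ℝ)) => show ENNReal.ofReal (dens M₂ y) * _ = 0 by
          simp [dens, not_lt.mpr (mem_Iic.mp hy)])]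
      simp
    rw [hzero, add_zero]
    refine setLIntegral_congr_fun measurableSet_Ioi
      (fun y hy => ?_)
    have hy0 : 0 < y := mem_Ioi.mp hy
    have hc : 0 < a + b / y := by positivity
    rw [hdX, withDensity_apply _ measurableSet_Iic, lint_Iic M₁ hM₁ hc]
    rw [show dens M₂ y = (M₂ : ℝ) * (1 - Real.exp (-y)) ^ (M₂ - 1) * Real.exp (-y) by
      simp [dens, hy0]]
    rw [← ENNReal.ofReal_mul (by
      have h1 : Real.exp (-y) ≤ 1 := Real.exp_le_one_iff.mpr (by linarith)
      have h2 : (0:ℝ) ≤ 1 - Real.exp (-y) := by linarith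
      have := (Real.exp_pos (-y)).le
      positivity)]
  have hGnonneg : ∀ y ∈ Ioi (0:ℝ), 0 ≤ (M₂ : ℝ) * (1 - Real.exp (-y)) ^ (M₂ - 1)
      * Real.exp (-y) * (1 - Real.exp (-(a + b / y))) ^ M₁ := by
    intro y hy
    have hy0 : 0 < y := mem_Ioi.mp hy
    have hc : 0 < a + b / y := by positivity
    have h1 : Real.exp (-y) ≤ 1 := Real.exp_le_one_iff.mpr (by linarith)
    have h2 : (0:ℝ) ≤ 1 - Real.exp (-y) := by linarith
    have h3 : Real.exp (-(a + b / y)) ≤ 1 := Real.exp_le_one_iff.mpr (by linarith)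
    have h4 : (0:ℝ) ≤ 1 - Real.exp (-(a + b / y)) := by linarith
    have := (Real.exp_pos (-y)).le
    positivity
  have hGint : IntegrableOn (fun y => (M₂ : ℝ) * (1 - Real.exp (-y)) ^ (M₂ - 1)
      * Real.exp (-y) * (1 - Real.exp (-(a + b / y))) ^ M₁) (Ioi (0:ℝ)) := by
    refine ((exp_neg_integrableOn_Ioi 0 one_pos).const_mul (M₂ : ℝ)).mono'
      (Measurable.aestronglyMeasurable (by fun_prop)) ?_
    filter_upwards [ae_restrict_mem measurableSet_Ioi] with y hy
    have hy0 : 0 < y := mem_Ioi.mp hy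
    have hc : 0 < a + b / y := by positivity
    have h3 : Real.exp (-(a + b / y)) ≤ 1 := Real.exp_le_one_iff.mpr (by linarith)
    have h4 : (0:ℝ) ≤ 1 - Real.exp (-(a + b / y)) := by linarith
    have h5 : (1 - Real.exp (-(a + b / y))) ^ M₁ ≤ 1 :=
      pow_le_one₀ h4 (by have := Real.exp_pos (-(a + b / y)); linarith)
    rw [Real.norm_eq_abs, abs_of_nonneg (hGnonneg y hy)]
    have h6 := dens_le M₂ hy0
    have h7 : (M₂ : ℝ) * (1 - Real.exp (-y)) ^ (M₂ - 1) * Real.exp (-y)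
        * (1 - Real.exp (-(a + b / y))) ^ M₁
        ≤ (M₂ : ℝ) * (1 - Real.exp (-y)) ^ (M₂ - 1) * Real.exp (-y) * 1 := by
      refine mul_le_mul_of_nonneg_left h5 ?_
      have h1 : Real.exp (-y) ≤ 1 := Real.exp_le_one_iff.mpr (by linarith)
      have h2 : (0:ℝ) ≤ 1 - Real.exp (-y) := by linarith
      have := (Real.exp_pos (-y)).le
      positivity
    rw [mul_one] at h7
    calc (M₂ : ℝ) * (1 - Real.exp (-y)) ^ (M₂ - 1) * Real.exp (-y)
          * (1 - Real.exp (-(a + b / y))) ^ M₁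
        ≤ (M₂ : ℝ) * (1 - Real.exp (-y)) ^ (M₂ - 1) * Real.exp (-y) := h7
      _ ≤ (M₂ : ℝ) * Real.exp (-y) := dens_le M₂ hy0
      _ = (M₂ : ℝ) * Real.exp (-1 * y) := by norm_num
  rw [h3, ← ofReal_integral_eq_lintegral_ofReal hGint
    ((ae_restrict_iff' measurableSet_Ioi).mpr (Filter.Eventually.of_forall hGnonneg)),
    ENNReal.toReal_ofReal (setIntegral_nonneg measurableSet_Ioi hGnonneg),
    main_integral M₁ M₂ hM₁ hM₂ a b ha hb]
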